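/- For every integer n ≥ 5, the identity per D_{(n,n)} = (n−2)·per D_{(n−1,n−1)} + (2n−2)·per D_{(n−2,n−2)} holds. -/

import Mathlib

open Matrix

/-- The permanent of a square matrix. -/
def per {n : ℕ} (A : Matrix (Fin n) (Fin n) ℚ) : ℚ :=
  ∑ σ : Equiv.Perm (Fin n), ∏ i, A i (σ i)

/-- The square matrix `D_{(n,l)}`: `-1` on the first `l` diagonal entries, `1` elsewhere. -/
def Dmat (n l : ℕ) : Matrix (Fin n) (Fin n) ℚ :=
  fun i j => if (i : ℕ) = (j : ℕ) ∧ (j : ℕ) < l then -1 else 1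

open Finset

/-- number of permutations of `Fin n` fixing every element of `t`. -/
lemma card_fixing (n : ℕ) (t : Finset (Fin n)) :
    (Finset.univ.filter (fun σ : Equiv.Perm (Fin n) => ∀ i ∈ t, σ i = i)).card
      = (n - t.card).factorial := by
  rw [← Fintype.card_subtype]
  have e1 : {σ : Equiv.Perm (Fin n) // ∀ i ∈ t, σ i = i}
      ≃ Equiv.Perm {i : Fin n // i ∉ t} := by
    refine Equiv.trans ?_ (Equiv.Perm.subtypeEquivSubtypePerm (fun i => i ∉ t)).symm
    exact Equiv.subtypeEquiv (Equiv.refl _) (fun σ => by simp)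
  rw [Fintype.card_congr e1, Fintype.card_perm]
  congr 1
  rw [Fintype.card_subtype_compl, Fintype.card_coe, Fintype.card_fin]

lemma per_D_eq (n : ℕ) :
    per (Dmat n n) = ∑ m ∈ Finset.range (n + 1),
      (n.choose m : ℚ) * (-2) ^ m * (n - m).factorial := by
  have hprod : ∀ σ : Equiv.Perm (Fin n),
      (∏ i, Dmat n n i (σ i)) = ∑ t ∈ (Finset.univ : Finset (Fin n)).powerset,
        (if ∀ i ∈ t, σ i = i then ((-2 : ℚ)) ^ t.card else 0) := by
    intro σ
    have h1 : ∀ i : Fin n, Dmat n n i (σ i)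
        = (if σ i = i then (-2 : ℚ) else 0) + 1 := by
      intro i
      simp only [Dmat]
      rcases eq_or_ne (σ i) i with h | h
      · rw [if_pos h, if_pos ⟨by rw [h], by simp [h]⟩]; norm_num
      · have hne : ¬ ((i : ℕ) = ((σ i) : ℕ) ∧ ((σ i) : ℕ) < n) := by
          simp [Fin.val_eq_val, (Ne.symm h)]
        rw [if_neg h, if_neg hne]; norm_num
    simp only [h1]
    rw [Finset.prod_add]
    refine Finset.sum_congr rfl fun t _ => ?_
    rw [Finset.prod_const_one, mul_one]
    by_cases h : ∀ i ∈ t, σ i = i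
    · rw [if_pos h, Finset.prod_congr rfl (fun i hi => if_pos (h i hi)),
        Finset.prod_const]
    · push_neg at h
      obtain ⟨i, hi, hne⟩ := h
      rw [if_neg (by push_neg; exact ⟨i, hi, hne⟩)]
      exact Finset.prod_eq_zero hi (if_neg hne)
  unfold per
  simp only [hprod]
  rw [Finset.sum_comm]
  have : ∀ t ∈ (Finset.univ : Finset (Fin n)).powerset,
      (∑ σ : Equiv.Perm (Fin n), if ∀ i ∈ t, σ i = i then ((-2 : ℚ)) ^ t.card else 0)
        = ((n - t.card).factorial : ℚ) * (-2) ^ t.card := by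
    intro t _
    rw [Finset.sum_ite, Finset.sum_const, Finset.sum_const_zero, add_zero, card_fixing]
    simp [mul_comm]
  rw [Finset.sum_congr rfl this]
  have := Finset.sum_powerset_apply_card
    (fun m => (((n - m).factorial : ℚ)) * (-2) ^ m) (x := (Finset.univ : Finset (Fin n)))
  rw [this, Finset.card_univ, Fintype.card_fin]
  refine Finset.sum_congr rfl fun m _ => ?_
  simp [nsmul_eq_mul]
  ring

/-- closed form as `n! * partial sum of exp(-2)` -/
lemma per_D_eq' (n : ℕ) :
    per (Dmat n n) = (n.factorial : ℚ) *
      ∑ k ∈ Finset.range (n + 1), (-2 : ℚ) ^ k / (k.factorial : ℚ) := by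
  rw [per_D_eq, Finset.mul_sum]
  refine Finset.sum_congr rfl fun m hm => ?_
  have hm' : m ≤ n := Nat.lt_succ_iff.mp (Finset.mem_range.mp hm)
  have key : (n.choose m : ℚ) * (n - m).factorial * (m.factorial : ℚ) = n.factorial := by
    have := Nat.choose_mul_factorial_mul_factorial hm'
    push_cast [← this]
    ring
  have hmf : (m.factorial : ℚ) ≠ 0 := Nat.cast_ne_zero.mpr m.factorial_ne_zero
  field_simp
  linear_combination key

theorem per_D_diag_recurrence (n : ℕ) (hn : 5 ≤ n) :
    per (Dmat n n) =
      ((n : ℚ) - 2) * per (Dmat (n - 1) (n - 1)) +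
        (2 * (n : ℚ) - 2) * per (Dmat (n - 2) (n - 2)) := by
  obtain ⟨m, rfl⟩ : ∃ m, n = m + 2 := ⟨n - 2, by omega⟩
  have h1 : m + 2 - 1 = m + 1 := by omega
  have h2 : m + 2 - 2 = m := by omega
  rw [h1, h2, per_D_eq', per_D_eq', per_D_eq']
  set s := ∑ k ∈ Finset.range (m + 1), (-2 : ℚ) ^ k / (k.factorial : ℚ) with hs
  have e1 : ∑ k ∈ Finset.range (m + 2), (-2 : ℚ) ^ k / (k.factorial : ℚ)
      = s + (-2) ^ (m + 1) / ((m + 1).factorial : ℚ) := by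
    rw [Finset.sum_range_succ]
  have e2 : ∑ k ∈ Finset.range (m + 3), (-2 : ℚ) ^ k / (k.factorial : ℚ)
      = s + (-2) ^ (m + 1) / ((m + 1).factorial : ℚ)
          + (-2) ^ (m + 2) / ((m + 2).factorial : ℚ) := by
    rw [Finset.sum_range_succ, e1]
  rw [e1, e2]
  have hf1 : ((m + 1).factorial : ℚ) = (m + 1) * m.factorial := by
    push_cast [Nat.factorial_succ]; ring
  have hf2 : ((m + 2).factorial : ℚ) = (m + 2) * ((m + 1) * m.factorial) := by
    push_cast [Nat.factorial_succ]; ring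
  have hmf : (m.factorial : ℚ) ≠ 0 := Nat.cast_ne_zero.mpr m.factorial_ne_zero
  have hc : ((m : ℚ) + 2) - 2 = m := by ring
  push_cast
  rw [hf1, hf2]
  have h1 : ((m : ℚ) + 1) ≠ 0 := by positivity
  have h2 : ((m : ℚ) + 2) ≠ 0 := by positivity
  field_simp
  ring
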